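/- If G is a connected graph with a path-decomposition (B_1,…,B_n) of width at most k, and P is a path in G from a vertex of B_1 to a vertex of B_n, then P has at least one vertex in each bag B_i, and (B_1 \ V(P),…,B_n \ V(P)) is a path-decomposition of G − V(P) of width at most k − 1. -/
import Mathlib


/-- `B` is a path-partition of `G` indexed by `Fin m`: the bags partition the
vertex set and every edge joins vertices in bags with indices differing by at most 1. -/
def IsPathPartition {V : Type*} (G : SimpleGraph V) {m : ℕ} (B : Fin m → Finset V) : Prop :=
  (∀ v : V, ∃! i : Fin m, v ∈ B i) ∧
  ∀ ⦃v w : V⦄, G.Adj v w → ∀ ⦃i j : Fin m⦄, v ∈ B i → w ∈ B j →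
    (i.val : ℤ) - j.val ≤ 1 ∧ (j.val : ℤ) - i.val ≤ 1

/-- `B` is a path-decomposition of the part of `G` induced on `U`:
bags lie in `U`, every edge of `G` inside `U` is in a common bag, every vertex
of `U` is in some bag, and the bags containing a given vertex are consecutive. -/
def IsPathDecompOn {V : Type*} (G : SimpleGraph V) (U : Set V) {n : ℕ}
    (B : Fin n → Finset V) : Prop :=
  (∀ i, ↑(B i) ⊆ U) ∧
  (∀ ⦃v w : V⦄, G.Adj v w → v ∈ U → w ∈ U → ∃ i, v ∈ B i ∧ w ∈ B i) ∧
  (∀ v ∈ U, ∃ i, v ∈ B i) ∧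
  (∀ (v : V) (i j l : Fin n), i ≤ j → j ≤ l → v ∈ B i → v ∈ B l → v ∈ B j)

/-- The part of `G` induced on `U` has pathwidth at most `k`. -/
def PWleOn {V : Type*} (G : SimpleGraph V) (U : Set V) (k : ℕ) : Prop :=
  ∃ (n : ℕ) (B : Fin n → Finset V), 0 < n ∧ IsPathDecompOn G U B ∧
    ∀ i, (B i).card ≤ k + 1

/-- `G` has pathwidth at most `k`. -/
def PWle {V : Type*} (G : SimpleGraph V) (k : ℕ) : Prop :=
  PWleOn G Set.univ k

/-- `B` is a `T`-partition of `G`: the bags (indexed by the vertices of `T`)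
partition `V(G)` and every edge of `G` joins vertices in the same bag or in
bags indexed by adjacent nodes of `T`. -/
def IsTreePartition {ι V : Type*} (T : SimpleGraph ι) (G : SimpleGraph V)
    (B : ι → Finset V) : Prop :=
  (∀ v : V, ∃! x : ι, v ∈ B x) ∧
  ∀ ⦃v w : V⦄, G.Adj v w → ∀ ⦃x y : ι⦄, v ∈ B x → w ∈ B y → x = y ∨ T.Adj x y

/-- `C` is a tree-decomposition of `G` indexed by the tree `T`: every edge lies
in some bag and for each vertex the nodes whose bags contain it induce a
non-empty connected subgraph of `T`. -/
def IsTreeDecomp {ι V : Type*} (T : SimpleGraph ι) (G : SimpleGraph V)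
    (C : ι → Finset V) : Prop :=
  (∀ ⦃v w : V⦄, G.Adj v w → ∃ x, v ∈ C x ∧ w ∈ C x) ∧
  (∀ v : V, ∃ x, v ∈ C x) ∧
  (∀ v : V, (T.induce {x : ι | v ∈ C x}).Connected)

/-- `G` has maximum degree at most `d`. -/
def MaxDegLE {V : Type*} (G : SimpleGraph V) (d : ℕ) : Prop :=
  ∀ v : V, (G.neighborSet v).ncard ≤ d

/-- The graph obtained from `G` by deleting the vertices in `S`. -/
def delv {V : Type*} (G : SimpleGraph V) (S : Set V) : SimpleGraph V :=
  SimpleGraph.fromRel (fun a b => G.Adj a b ∧ a ∉ S ∧ b ∉ S)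

/-- If `G` is connected with a path-decomposition
`(B_1, …, B_n)` of width at most `k` and `P` is a path in `G` from a vertex of
`B_1` to a vertex of `B_n`, then `P` meets every bag, and the bags with `V(P)`
removed form a path-decomposition of `G − V(P)` of width at most `k − 1`. -/
theorem stmt4 {V : Type*} [DecidableEq V] (G : SimpleGraph V) (hconn : G.Connected)
    (k n : ℕ) (hn : 0 < n) (B : Fin n → Finset V)
    (hpd : IsPathDecompOn G Set.univ B) (hwidth : ∀ i, (B i).card ≤ k + 1)
    (u v : V) (p : G.Walk u v) (hp : p.IsPath)
    (hu : u ∈ B ⟨0, hn⟩) (hv : v ∈ B ⟨n - 1, by omega⟩) :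
    (∀ i, ∃ x ∈ p.support, x ∈ B i) ∧
    IsPathDecompOn G {x : V | x ∉ p.support}
      (fun i => (B i).filter (· ∉ p.support)) ∧
    ∀ i, ((B i).filter (· ∉ p.support)).card ≤ k := by
  obtain ⟨hsub, hedge, hmem, hconv⟩ := hpd
  have key : ∀ (i : Fin n) {a b : V} (q : G.Walk a b) (j l : Fin n),
      j ≤ i → i ≤ l → a ∈ B j → b ∈ B l → ∃ x ∈ q.support, x ∈ B i := by
    intro i a b q
    induction q with
    | nil =>
      intro j l hj hl ha hb
      exact ⟨_, by simp, hconv _ j i l hj hl ha hb⟩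
    | cons h q ih =>
      intro j l hj hl ha hb
      obtain ⟨m, ham, hbm⟩ := hedge h trivial trivial
      by_cases him : i ≤ m
      · exact ⟨_, by simp, hconv _ j i m hj him ha ham⟩
      · obtain ⟨x, hx, hxi⟩ := ih m l (le_of_not_ge him) hl hbm hb
        exact ⟨x, by simp [hx], hxi⟩
  have h1 : ∀ i, ∃ x ∈ p.support, x ∈ B i := by
    intro i
    exact key i p ⟨0, hn⟩ ⟨n - 1, by omega⟩ (by simp [Fin.le_def])
      (by simp [Fin.le_def]; omega) hu hv
  refine ⟨h1, ⟨?_, ?_, ?_, ?_⟩, ?_⟩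
  · intro i x hx
    simp only [Finset.coe_filter, Set.mem_setOf_eq] at hx
    exact hx.2
  · intro a b hab ha hb
    obtain ⟨m, h1', h2'⟩ := hedge hab trivial trivial
    exact ⟨m, Finset.mem_filter.2 ⟨h1', ha⟩, Finset.mem_filter.2 ⟨h2', hb⟩⟩
  · intro x hx
    obtain ⟨i, hi⟩ := hmem x trivial
    exact ⟨i, Finset.mem_filter.2 ⟨hi, hx⟩⟩
  · intro x i j l hij hjl hi hl
    simp only [Finset.mem_filter] at *
    exact ⟨hconv x i j l hij hjl hi.1 hl.1, hi.2⟩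
  · intro i
    obtain ⟨x, hxs, hxB⟩ := h1 i
    have hss : (B i).filter (· ∉ p.support) ⊆ (B i).erase x := by
      intro y hy
      simp only [Finset.mem_filter] at hy
      exact Finset.mem_erase.2 ⟨fun h => hy.2 (h ▸ hxs), hy.1⟩
    calc ((B i).filter (· ∉ p.support)).card ≤ ((B i).erase x).card :=
          Finset.card_le_card hss
      _ = (B i).card - 1 := Finset.card_erase_of_mem hxB
      _ ≤ k := by have := hwidth i; omega
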